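/- Let V = ℓ²(ℕ;ℂ) ⊗ ℓ²(ℕ;ℂ) be the algebraic tensor product, equipped with a norm ‖·‖_γ satisfying the cross property ‖z₁⊗z₂‖_γ = ‖z₁‖·‖z₂‖ for all z₁,z₂∈ℓ². Assume: (i) for every bounded operator a on ℓ² there is a constant C_a with ‖(a⊗id)(u)‖_γ ≤ C_a·‖u‖_γ for all u∈V; (ii) the normed space (V,‖·‖_γ) satisfies the property (α) inequality for some constant α≥1. Then there exists K≥1 such that for every finitely supported family of scalars (s_{ij}): K^{-1}·(Σ_{i,j}|s_{ij}|²)^{1/2} ≤ ‖Σ_{i,j} s_{ij} e_i⊗e_j‖_γ ≤ K·(Σ_{i,j}|s_{ij}|²)^{1/2}; that is, ‖·‖_γ is equivalent to the Hilbert–Schmidt norm, and the completion of V is isomorphic to the space S² of Hilbert–Schmidt operators on ℓ². -/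

import Mathlib

set_option synthInstance.maxHeartbeats 1000000
set_option maxHeartbeats 1000000

noncomputable section

open scoped TensorProduct ComplexConjugate

/-- The sign `±1` (as a complex scalar) associated to a boolean. -/
def sgn (b : Bool) : ℂ := if b then 1 else -1

/-- The canonical orthonormal basis of `ℓ²(ℕ;ℂ)`. -/
def e (i : ℕ) : lp (fun _ : ℕ => ℂ) 2 := lp.single 2 i (1 : ℂ)

namespace CPA

abbrev L2 : Type := lp (fun _ : ℕ => ℂ) 2

lemma sgn_conj (b : Bool) : conj (sgn b) = sgn b := by cases b <;> simp [sgn]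

lemma sgn_mul_self (b : Bool) : sgn b * sgn b = 1 := by cases b <;> simp [sgn]

lemma sgn_norm (b : Bool) : ‖sgn b‖ = 1 := by cases b <;> simp [sgn]

lemma e_inner (i : ℕ) (z : L2) : (inner ℂ (e i) z : ℂ) = z i := by
  rw [e, lp.inner_single_left]
  simp [RCLike.inner_apply]

lemma e_orthonormal : Orthonormal ℂ e := by
  rw [orthonormal_iff_ite]
  intro i j
  rw [e_inner]
  rw [e, lp.single_apply]
  simp [Pi.single_apply, eq_comm]

lemma e_norm (i : ℕ) : ‖e i‖ = 1 := e_orthonormal.1 i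

lemma coord_sq_le (z : L2) (S : Finset ℕ) : ∑ n ∈ S, ‖z n‖^2 ≤ ‖z‖^2 := by
  have h := lp.hasSum_inner (𝕜 := ℂ) z z
  have h2 : HasSum (fun i => ‖z i‖^2) (‖z‖^2) := by
    have := h.mapL Complex.reCLM
    simp only [Complex.reCLM_apply] at this
    convert this using 2 with i
    · exact (inner_self_eq_norm_sq (𝕜 := ℂ) (z i)).symm
    · exact (inner_self_eq_norm_sq (𝕜 := ℂ) z).symm
  exact sum_le_hasSum S (fun i _ => by positivity) h2

lemma sgn_not (b : Bool) : sgn (!b) = - sgn b := by cases b <;> simp [sgn]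

lemma sgn_sum (r : ℕ) (l m : Fin r) :
    ∑ ε : Fin r → Bool, sgn (ε l) * sgn (ε m) = if l = m then (2:ℂ)^r else 0 := by
  by_cases h : l = m
  · subst h
    simp only [sgn_mul_self, if_pos rfl, Finset.sum_const, Finset.card_univ, nsmul_eq_mul, mul_one]
    rw [Fintype.card_fun]
    simp
  · rw [if_neg h]
    set f : (Fin r → Bool) → ℂ := fun ε => sgn (ε l) * sgn (ε m) with hf
    have hinv : Function.Involutive (fun a : Fin r → Bool => Function.update a l (!(a l))) := by
      intro a
      funext j
      by_cases hj : j = l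
      · subst hj; simp
      · simp [Function.update_of_ne hj]
    have hrev : ∑ ε : Fin r → Bool, f ε
        = ∑ ε : Fin r → Bool, f (Function.update ε l (!(ε l))) := by
      exact (Fintype.sum_bijective _ hinv.bijective _ _ (fun ε => rfl)).symm
    have hneg : ∀ ε : Fin r → Bool, f (Function.update ε l (!(ε l))) = - f ε := by
      intro ε
      rw [hf]
      simp only []
      rw [Function.update_self, Function.update_of_ne (fun hc => h (by rw [hc]))]
      rw [sgn_not]
      ring
    have : (∑ ε : Fin r → Bool, f ε) = - ∑ ε : Fin r → Bool, f ε := by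
      calc (∑ ε : Fin r → Bool, f ε)
          = ∑ ε : Fin r → Bool, f (Function.update ε l (!(ε l))) := hrev
        _ = ∑ ε : Fin r → Bool, (- f ε) := Finset.sum_congr rfl (fun ε _ => hneg ε)
        _ = - ∑ ε : Fin r → Bool, f ε := by rw [Finset.sum_neg_distrib]
    have h2 : (2:ℂ) * ∑ ε : Fin r → Bool, f ε = 0 := by
      rw [two_mul]
      nth_rewrite 1 [this]
      ring
    have := mul_eq_zero.mp h2
    simpa using this

lemma rademacher (r : ℕ) (x : Fin r → L2) :
    ∑ ε : Fin r → Bool, ‖∑ l, sgn (ε l) • x l‖^2 = 2^r * ∑ l, ‖x l‖^2 := by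
  have key : ∀ ε : Fin r → Bool, ‖∑ l, sgn (ε l) • x l‖^2
      = (∑ l, ∑ m, (sgn (ε l) * sgn (ε m)) * (inner ℂ (x l) (x m) : ℂ)).re := by
    intro ε
    have h1 : (inner ℂ (∑ l, sgn (ε l) • x l) (∑ l, sgn (ε l) • x l) : ℂ)
        = ∑ l, ∑ m, (sgn (ε l) * sgn (ε m)) * (inner ℂ (x l) (x m) : ℂ) := by
      rw [sum_inner]
      refine Finset.sum_congr rfl fun l _ => ?_
      rw [inner_sum]
      refine Finset.sum_congr rfl fun m _ => ?_
      rw [inner_smul_left, inner_smul_right, sgn_conj]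
      ring
    rw [← inner_self_eq_norm_sq (𝕜 := ℂ), h1]
    simp [RCLike.re_to_complex]
  simp_rw [key]
  rw [← Complex.re_sum]
  rw [Finset.sum_comm]
  have : ∀ l : Fin r, (∑ ε : Fin r → Bool, ∑ m, (sgn (ε l) * sgn (ε m)) * (inner ℂ (x l) (x m) : ℂ))
      = (2:ℂ)^r * (inner ℂ (x l) (x l) : ℂ) := by
    intro l
    rw [Finset.sum_comm]
    have : ∀ m : Fin r, (∑ ε : Fin r → Bool, (sgn (ε l) * sgn (ε m)) * (inner ℂ (x l) (x m) : ℂ))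
        = (if l = m then (2:ℂ)^r else 0) * (inner ℂ (x l) (x m) : ℂ) := by
      intro m
      rw [← Finset.sum_mul, sgn_sum]
    simp_rw [this]
    simp [Finset.sum_ite_eq, ite_mul]
  simp_rw [this]
  rw [← Finset.mul_sum]
  have h2 : ((2:ℂ)^r) = ((2:ℝ)^r : ℝ) := by push_cast; ring
  rw [h2, Complex.re_ofReal_mul, Complex.re_sum]
  congr 1
  refine Finset.sum_congr rfl fun l _ => ?_
  exact inner_self_eq_norm_sq (𝕜 := ℂ) (x l)
lemma conj_mul_re (w : ℂ) : (conj w * w).re = ‖w‖^2 := by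
  rw [mul_comm, Complex.mul_conj]
  simp only [Complex.normSq_eq_norm_sq, ← Complex.ofReal_pow, Complex.ofReal_re]

def om (r : ℕ) : ℂ := Complex.exp (2 * Real.pi * Complex.I / r)

lemma om_pow_r (r : ℕ) (hr : r ≠ 0) : (om r)^r = 1 :=
  (Complex.isPrimitiveRoot_exp r hr).pow_eq_one

lemma om_norm (r : ℕ) : ‖om r‖ = 1 := by
  rw [om]
  have : 2 * Real.pi * Complex.I / r = ((2 * Real.pi / r : ℝ) : ℂ) * Complex.I := by
    push_cast; ring
  rw [this]
  exact Complex.norm_exp_ofReal_mul_I _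

lemma om_pow_norm (r k : ℕ) : ‖(om r)^k‖ = 1 := by
  rw [norm_pow, om_norm, one_pow]

lemma conj_mul_self_pow (r k : ℕ) : conj ((om r)^k) * (om r)^k = 1 := by
  have := Complex.normSq_eq_conj_mul_self (z := (om r)^k)
  rw [← this, Complex.normSq_eq_norm_sq]
  have : ‖(om r)^k‖ = 1 := om_pow_norm r k
  rw [this]; norm_num

lemma om_pow_ne (r k : ℕ) : (om r)^k ≠ 0 := by
  apply pow_ne_zero; rw [om]; exact Complex.exp_ne_zero _

lemma om_conj_pow (r k : ℕ) : conj ((om r)^k) = ((om r)^k)⁻¹ := by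
  have h := conj_mul_self_pow r k
  exact eq_inv_of_mul_eq_one_left h

lemma geo (r : ℕ) (hr : r ≠ 0) (i i' : ℕ) (hi : i < r) (hi' : i' < r) :
    ∑ l : Fin r, (om r)^(l.val * i) * conj ((om r)^(l.val * i')) = if i = i' then (r:ℂ) else 0 := by
  have hprim := Complex.isPrimitiveRoot_exp r hr
  have hterm : ∀ l : Fin r, (om r)^(l.val * i) * conj ((om r)^(l.val * i'))
      = ((om r)^i * ((om r)^i')⁻¹)^l.val := by
    intro l
    rw [om_conj_pow, mul_pow, inv_pow]
    congr 1
    · rw [← pow_mul, Nat.mul_comm]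
    · rw [← pow_mul, Nat.mul_comm]
  simp_rw [hterm]
  rw [Fin.sum_univ_eq_sum_range (fun l => ((om r)^i * ((om r)^i')⁻¹)^l) r]
  by_cases h : i = i'
  · subst h
    have hne : (om r)^i ≠ 0 := by
      apply pow_ne_zero; rw [om]; exact Complex.exp_ne_zero _
    rw [mul_inv_cancel₀ hne]
    simp [if_pos rfl]
  · rw [if_neg h]
    set ζ : ℂ := (om r)^i * ((om r)^i')⁻¹ with hζ
    have hne0 : (om r)^i' ≠ 0 := by
      apply pow_ne_zero; rw [om]; exact Complex.exp_ne_zero _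
    have hζr : ζ^r = 1 := by
      rw [hζ, mul_pow, inv_pow, ← pow_mul, ← pow_mul, Nat.mul_comm i r, Nat.mul_comm i' r,
        pow_mul, pow_mul, om_pow_r r hr, one_pow, one_pow]
      simp
    have hζ1 : ζ ≠ 1 := by
      intro hc
      rw [hζ] at hc
      have : (om r)^i = (om r)^i' := by
        field_simp at hc
        exact hc
      exact h (hprim.pow_inj hi hi' this)
    rw [geom_sum_eq hζ1, hζr]
    simp

def cmat (r : ℕ) (ε η : Fin r → Bool) (l i : Fin r) : ℂ :=
  (sgn (ε l) * sgn (η i) * (om r)^(l.val * i.val)) * (((Real.sqrt r)⁻¹ : ℝ) : ℂ)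

lemma invsq_mul_self_mul_r (r : ℕ) (hr : r ≠ 0) :
    (((Real.sqrt r)⁻¹ : ℝ) : ℂ) * (((Real.sqrt r)⁻¹ : ℝ) : ℂ) * (r:ℂ) = 1 := by
  have hx : ((Real.sqrt r)⁻¹ * (Real.sqrt r)⁻¹ * r : ℝ) = 1 := by
    rw [← mul_inv, Real.mul_self_sqrt (by positivity)]
    have : (r:ℝ) ≠ 0 := Nat.cast_ne_zero.mpr hr
    field_simp
  have := congrArg (fun x : ℝ => (x : ℂ)) hx
  push_cast at this
  simp only [Complex.ofReal_inv]
  linear_combination this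

lemma cmat_col (r : ℕ) (hr : r ≠ 0) (ε η : Fin r → Bool) (i i' : Fin r) :
    ∑ l : Fin r, cmat r ε η l i * conj (cmat r ε η l i') = if i = i' then 1 else 0 := by
  have hterm : ∀ l : Fin r, cmat r ε η l i * conj (cmat r ε η l i')
      = (sgn (η i) * sgn (η i') * ((((Real.sqrt r)⁻¹ : ℝ) : ℂ) * (((Real.sqrt r)⁻¹ : ℝ) : ℂ)))
        * ((om r)^(l.val * i.val) * conj ((om r)^(l.val * i'.val))) := by
    intro l
    rw [cmat, cmat, map_mul, map_mul, map_mul, sgn_conj, sgn_conj, Complex.conj_ofReal]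
    linear_combination (sgn (η i) * sgn (η i') * ((((Real.sqrt r)⁻¹ : ℝ) : ℂ) * (((Real.sqrt r)⁻¹ : ℝ) : ℂ))
      * ((om r)^(l.val * i.val) * conj ((om r)^(l.val * i'.val)))) * sgn_mul_self (ε l)
  simp_rw [hterm]
  rw [← Finset.mul_sum, geo r hr i.val i'.val i.isLt i'.isLt]
  by_cases h : i = i'
  · subst h
    rw [if_pos rfl, if_pos rfl]
    linear_combination ((((Real.sqrt r)⁻¹ : ℝ) : ℂ) * (((Real.sqrt r)⁻¹ : ℝ) : ℂ) * (r:ℂ)) * sgn_mul_self (η i)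
      + invsq_mul_self_mul_r r hr
  · rw [if_neg (fun hc => h (Fin.ext hc)), if_neg h, mul_zero]

lemma cmat_row (r : ℕ) (hr : r ≠ 0) (ε η : Fin r → Bool) (i i' : Fin r) :
    ∑ l : Fin r, cmat r ε η i l * conj (cmat r ε η i' l) = if i = i' then 1 else 0 := by
  have hterm : ∀ l : Fin r, cmat r ε η i l * conj (cmat r ε η i' l)
      = (sgn (ε i) * sgn (ε i') * ((((Real.sqrt r)⁻¹ : ℝ) : ℂ) * (((Real.sqrt r)⁻¹ : ℝ) : ℂ)))
        * ((om r)^(l.val * i.val) * conj ((om r)^(l.val * i'.val))) := by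
    intro l
    rw [cmat, cmat, map_mul, map_mul, map_mul, sgn_conj, sgn_conj, Complex.conj_ofReal,
      Nat.mul_comm i.val l.val, Nat.mul_comm i'.val l.val]
    linear_combination (sgn (ε i) * sgn (ε i') * ((((Real.sqrt r)⁻¹ : ℝ) : ℂ) * (((Real.sqrt r)⁻¹ : ℝ) : ℂ))
      * ((om r)^(l.val * i.val) * conj ((om r)^(l.val * i'.val)))) * sgn_mul_self (η l)
  simp_rw [hterm]
  rw [← Finset.mul_sum, geo r hr i.val i'.val i.isLt i'.isLt]
  by_cases h : i = i'
  · subst h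
    rw [if_pos rfl, if_pos rfl]
    linear_combination ((((Real.sqrt r)⁻¹ : ℝ) : ℂ) * (((Real.sqrt r)⁻¹ : ℝ) : ℂ) * (r:ℂ)) * sgn_mul_self (ε i)
      + invsq_mul_self_mul_r r hr
  · rw [if_neg (fun hc => h (Fin.ext hc)), if_neg h, mul_zero]

abbrev EE : Type := L2 →L[ℂ] L2

def opA (r : ℕ) (c : Fin r → Fin r → ℂ) : EE :=
  ∑ l : Fin r, ∑ i : Fin r, c l i • ((innerSL ℂ (e i.val)).smulRight (e l.val))

lemma opA_apply (r : ℕ) (c : Fin r → Fin r → ℂ) (z : L2) :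
    opA r c z = ∑ l : Fin r, (∑ i : Fin r, c l i * z i.val) • e l.val := by
  rw [opA, ContinuousLinearMap.sum_apply]
  refine Finset.sum_congr rfl fun l _ => ?_
  rw [ContinuousLinearMap.sum_apply, Finset.sum_smul]
  refine Finset.sum_congr rfl fun i _ => ?_
  rw [ContinuousLinearMap.smul_apply, ContinuousLinearMap.smulRight_apply, innerSL_apply_apply,
    e_inner, smul_smul]

lemma opA_e (r : ℕ) (c : Fin r → Fin r → ℂ) (i₀ : Fin r) :
    opA r c (e i₀.val) = ∑ l : Fin r, c l i₀ • e l.val := by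
  rw [opA_apply]
  refine Finset.sum_congr rfl fun l _ => ?_
  congr 1
  have hcoord : ∀ i : Fin r, (e i₀.val : ∀ n : ℕ, ℂ) i.val = if i = i₀ then 1 else 0 := by
    intro i
    by_cases h : i = i₀
    · subst h; simp [e, lp.single_apply]
    · have hv : (i:ℕ) ≠ (i₀:ℕ) := fun hc => h (Fin.ext hc)
      simp [e, lp.single_apply, Pi.single_apply, hv, h]
  simp_rw [hcoord]
  simp [Finset.sum_ite_eq]

lemma norm_comb_sq (r : ℕ) (w : Fin r → ℂ) :
    ‖∑ l : Fin r, w l • e l.val‖^2 = ∑ l : Fin r, ‖w l‖^2 := by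
  have hON : Orthonormal ℂ (fun l : Fin r => e l.val) :=
    e_orthonormal.comp (Fin.val : Fin r → ℕ) Fin.val_injective
  have h := hON.inner_sum w w Finset.univ
  rw [← inner_self_eq_norm_sq (𝕜 := ℂ)]
  erw [h]
  rw [RCLike.re_to_complex, Complex.re_sum]
  exact Finset.sum_congr rfl fun l _ => conj_mul_re (w l)

lemma opA_norm (r : ℕ) (c : Fin r → Fin r → ℂ)
    (hcol : ∀ i i' : Fin r, ∑ l : Fin r, c l i * conj (c l i') = if i = i' then 1 else 0) :
    ‖opA r c‖ ≤ 1 := by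
  refine ContinuousLinearMap.opNorm_le_bound _ zero_le_one fun z => ?_
  rw [one_mul, opA_apply]
  have hsq : ‖∑ l : Fin r, (∑ i : Fin r, c l i * z i.val) • e l.val‖^2 ≤ ‖z‖^2 := by
    rw [norm_comb_sq]
    have hc : (∑ l : Fin r, conj (∑ i : Fin r, c l i * z i.val) * (∑ i : Fin r, c l i * z i.val))
        = ∑ i : Fin r, conj (z i.val) * z i.val := by
      have expand : ∀ l : Fin r,
          conj (∑ i : Fin r, c l i * z i.val) * (∑ i : Fin r, c l i * z i.val)
          = ∑ i' : Fin r, ∑ i : Fin r, (c l i * conj (c l i')) * (conj (z i'.val) * z i.val) := by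
        intro l
        rw [map_sum, Finset.sum_mul_sum]
        refine Finset.sum_congr rfl fun i' _ => Finset.sum_congr rfl fun i _ => ?_
        rw [map_mul]
        ring
      simp_rw [expand]
      rw [Finset.sum_comm]
      have hswap : ∀ i' : Fin r,
          (∑ l : Fin r, ∑ i : Fin r, (c l i * conj (c l i')) * (conj (z i'.val) * z i.val))
          = ∑ i : Fin r, (if i = i' then (1:ℂ) else 0) * (conj (z i'.val) * z i.val) := by
        intro i'
        rw [Finset.sum_comm]
        refine Finset.sum_congr rfl fun i _ => ?_
        rw [← Finset.sum_mul, hcol i i']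
      simp_rw [hswap]
      rw [Finset.sum_comm]
      simp [Finset.sum_ite_eq]
    have hre : (∑ l : Fin r, ‖∑ i : Fin r, c l i * z i.val‖^2)
        = (∑ i : Fin r, conj (z i.val) * z i.val).re := by
      rw [← hc, Complex.re_sum]
      exact (Finset.sum_congr rfl fun l _ => (conj_mul_re _).symm)
    rw [hre, Complex.re_sum]
    have : (∑ i : Fin r, (conj (z i.val) * z i.val).re) = ∑ i : Fin r, ‖z i.val‖^2 :=
      Finset.sum_congr rfl fun i _ => conj_mul_re _
    rw [this, Fin.sum_univ_eq_sum_range (fun n => ‖z n‖^2) r]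
    exact coord_sq_le z (Finset.range r)
  nlinarith [norm_nonneg (∑ l : Fin r, (∑ i : Fin r, c l i * z i.val) • e l.val), norm_nonneg z]

abbrev V2 : Type := TensorProduct ℂ L2 L2

lemma mapL_sub (a b : EE) (u : V2) :
    TensorProduct.map (a - b).toLinearMap LinearMap.id u
      = TensorProduct.map a.toLinearMap LinearMap.id u
        - TensorProduct.map b.toLinearMap LinearMap.id u := by
  have h1 : (a - b).toLinearMap = a.toLinearMap + (-1 : ℂ) • b.toLinearMap := by
    apply LinearMap.ext
    intro z
    show a z - b z = a z + (-1:ℂ) • b z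
    rw [neg_one_smul, sub_eq_add_neg]
  rw [h1, TensorProduct.map_add_left, TensorProduct.map_smul_left]
  simp only [LinearMap.add_apply, LinearMap.smul_apply]
  module

lemma mapL_add (a b : EE) (u : V2) :
    TensorProduct.map (a + b).toLinearMap LinearMap.id u
      = TensorProduct.map a.toLinearMap LinearMap.id u
        + TensorProduct.map b.toLinearMap LinearMap.id u := by
  have h1 : (a + b).toLinearMap = a.toLinearMap + b.toLinearMap := by ext z; simp
  rw [h1, TensorProduct.map_add_left]
  simp

lemma mapL_smul (c : ℂ) (a : EE) (u : V2) :
    TensorProduct.map ((c • a) : EE).toLinearMap LinearMap.id u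
      = c • TensorProduct.map a.toLinearMap LinearMap.id u := by
  have h1 : ((c • a) : EE).toLinearMap = c • a.toLinearMap := by ext z; simp
  rw [h1, TensorProduct.map_smul_left]
  simp

section Baire

variable (Nγ : V2 → ℝ)

lemma uniform_bound
    (hnonneg : ∀ u, 0 ≤ Nγ u)
    (htriangle : ∀ u v, Nγ (u + v) ≤ Nγ u + Nγ v)
    (hhomog : ∀ (c : ℂ) u, Nγ (c • u) = ‖c‖ * Nγ u)
    (hcross : ∀ z₁ z₂ : L2, Nγ (z₁ ⊗ₜ[ℂ] z₂) = ‖z₁‖ * ‖z₂‖)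
    (hext : ∀ a : EE, ∃ C : ℝ, ∀ u,
      Nγ (TensorProduct.map a.toLinearMap LinearMap.id u) ≤ C * Nγ u) :
    ∃ C₀ : ℝ, 1 ≤ C₀ ∧ ∀ (a : EE) (u : V2),
      Nγ (TensorProduct.map a.toLinearMap LinearMap.id u) ≤ C₀ * ‖a‖ * Nγ u := by
  have hzero : Nγ 0 = 0 := by
    have := hhomog 0 0
    simpa using this
  have hneg : ∀ u, Nγ (-u) = Nγ u := by
    intro u
    have := hhomog (-1) u
    simpa using this
  have hM : ∀ u : V2, ∃ M : ℝ, 0 ≤ M ∧ ∀ a : EE,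
      Nγ (TensorProduct.map a.toLinearMap LinearMap.id u) ≤ M * ‖a‖ := by
    intro u
    induction u using TensorProduct.induction_on with
    | zero =>
      refine ⟨0, le_refl 0, fun a => ?_⟩
      rw [map_zero, hzero, zero_mul]
    | tmul z w =>
      refine ⟨‖z‖ * ‖w‖, by positivity, fun a => ?_⟩
      rw [TensorProduct.map_tmul]
      have : (LinearMap.id : L2 →ₗ[ℂ] L2) w = w := rfl
      rw [this, hcross]
      have h1 : ‖a.toLinearMap z‖ ≤ ‖a‖ * ‖z‖ := a.le_opNorm z
      calc ‖a.toLinearMap z‖ * ‖w‖ ≤ (‖a‖ * ‖z‖) * ‖w‖ :=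
            mul_le_mul_of_nonneg_right h1 (norm_nonneg w)
        _ = ‖z‖ * ‖w‖ * ‖a‖ := by ring
    | add u v hu hv =>
      obtain ⟨M1, hM1, h1⟩ := hu
      obtain ⟨M2, hM2, h2⟩ := hv
      refine ⟨M1 + M2, by positivity, fun a => ?_⟩
      rw [map_add]
      calc Nγ (TensorProduct.map a.toLinearMap LinearMap.id u
            + TensorProduct.map a.toLinearMap LinearMap.id v)
          ≤ Nγ (TensorProduct.map a.toLinearMap LinearMap.id u)
            + Nγ (TensorProduct.map a.toLinearMap LinearMap.id v) := htriangle _ _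
        _ ≤ M1 * ‖a‖ + M2 * ‖a‖ := add_le_add (h1 a) (h2 a)
        _ = (M1 + M2) * ‖a‖ := by ring
  set S : ℕ → Set EE := fun k =>
    {a : EE | ∀ u, Nγ (TensorProduct.map a.toLinearMap LinearMap.id u) ≤ (k : ℝ) * Nγ u}
    with hS
  have hclosed : ∀ k, IsClosed (S k) := by
    intro k
    have : S k = ⋂ u : V2,
        {a : EE | Nγ (TensorProduct.map a.toLinearMap LinearMap.id u) ≤ (k : ℝ) * Nγ u} := by
      ext a; simp [hS, Set.mem_iInter]
    rw [this]
    refine isClosed_iInter fun u => ?_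
    obtain ⟨M, hM0, hMb⟩ := hM u
    have hcont : Continuous (fun a : EE => Nγ (TensorProduct.map a.toLinearMap LinearMap.id u)) := by
      refine (LipschitzWith.of_dist_le_mul (K := M.toNNReal) ?_).continuous
      intro a b
      rw [Real.dist_eq]
      have hd : Nγ (TensorProduct.map a.toLinearMap LinearMap.id u)
            - Nγ (TensorProduct.map b.toLinearMap LinearMap.id u)
          ≤ Nγ (TensorProduct.map (a - b).toLinearMap LinearMap.id u) := by
        rw [mapL_sub]
        have := htriangle (TensorProduct.map a.toLinearMap LinearMap.id u
          - TensorProduct.map b.toLinearMap LinearMap.id u)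
          (TensorProduct.map b.toLinearMap LinearMap.id u)
        simp only [sub_add_cancel] at this
        linarith
      have hd' : Nγ (TensorProduct.map b.toLinearMap LinearMap.id u)
            - Nγ (TensorProduct.map a.toLinearMap LinearMap.id u)
          ≤ Nγ (TensorProduct.map (a - b).toLinearMap LinearMap.id u) := by
        rw [mapL_sub]
        have h2 : Nγ (TensorProduct.map b.toLinearMap LinearMap.id u
            - TensorProduct.map a.toLinearMap LinearMap.id u)
            = Nγ (TensorProduct.map a.toLinearMap LinearMap.id u
            - TensorProduct.map b.toLinearMap LinearMap.id u) := by
          rw [← hneg]; congr 1; abel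
        have := htriangle (TensorProduct.map b.toLinearMap LinearMap.id u
          - TensorProduct.map a.toLinearMap LinearMap.id u)
          (TensorProduct.map a.toLinearMap LinearMap.id u)
        simp only [sub_add_cancel] at this
        linarith [this, h2.le, h2.ge]
      have habs : |Nγ (TensorProduct.map a.toLinearMap LinearMap.id u)
          - Nγ (TensorProduct.map b.toLinearMap LinearMap.id u)|
          ≤ Nγ (TensorProduct.map (a - b).toLinearMap LinearMap.id u) :=
        abs_sub_le_iff.mpr ⟨hd, hd'⟩
      calc |Nγ (TensorProduct.map a.toLinearMap LinearMap.id u)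
          - Nγ (TensorProduct.map b.toLinearMap LinearMap.id u)|
          ≤ Nγ (TensorProduct.map (a - b).toLinearMap LinearMap.id u) := habs
        _ ≤ M * ‖a - b‖ := hMb (a - b)
        _ = (M.toNNReal : ℝ) * dist a b := by
            rw [dist_eq_norm, Real.coe_toNNReal M hM0]
    exact isClosed_le hcont (by continuity)
  have hcover : (⋃ k : ℕ, S k) = Set.univ := by
    refine Set.eq_univ_of_forall fun a => ?_
    obtain ⟨C, hC⟩ := hext a
    refine Set.mem_iUnion.mpr ⟨⌈C⌉₊, fun u => ?_⟩
    calc Nγ (TensorProduct.map a.toLinearMap LinearMap.id u) ≤ C * Nγ u := hC u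
      _ ≤ (⌈C⌉₊ : ℝ) * Nγ u := mul_le_mul_of_nonneg_right (Nat.le_ceil C) (hnonneg u)
  obtain ⟨k, hk⟩ := nonempty_interior_of_iUnion_of_closed hclosed hcover
  obtain ⟨a₀, ha₀⟩ := hk
  rw [mem_interior_iff_mem_nhds, Metric.mem_nhds_iff] at ha₀
  obtain ⟨δ, hδ, hball⟩ := ha₀
  refine ⟨max 1 (4 * k / δ), le_max_left _ _, fun a u => ?_⟩
  by_cases ha : a = 0
  · subst ha
    have h0 : ((0 : EE) : EE) = (0:ℂ) • (0 : EE) := by simp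
    rw [h0, mapL_smul]
    rw [hhomog]
    simp [hzero]
  · have hna : (0:ℝ) < ‖a‖ := norm_pos_iff.mpr ha
    set b : EE := ((δ / (2 * ‖a‖) : ℝ) : ℂ) • a with hb
    have hnb : ‖b‖ = δ / 2 := by
      have hns := norm_smul (((δ / (2 * ‖a‖) : ℝ) : ℂ)) a
      rw [hb, hns, Complex.norm_real, Real.norm_eq_abs, abs_of_pos (by positivity)]
      field_simp
    have hmem1 : a₀ + b ∈ S k := by
      apply hball
      rw [Metric.mem_ball, dist_eq_norm]
      simp only [add_sub_cancel_left]
      rw [hnb]; linarith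
    have hmem2 : a₀ - b ∈ S k := by
      apply hball
      rw [Metric.mem_ball, dist_eq_norm]
      simp only [sub_sub_cancel_left]
      rw [norm_neg, hnb]; linarith
    have hbu : Nγ (TensorProduct.map b.toLinearMap LinearMap.id u) ≤ (k:ℝ) * Nγ u := by
      have hdiff : (a₀ + b) - (a₀ - b) = b + b := by abel
      have hrep2 : TensorProduct.map b.toLinearMap LinearMap.id u
          = ((2:ℂ)⁻¹) • (TensorProduct.map (a₀+b).toLinearMap LinearMap.id u
              - TensorProduct.map (a₀-b).toLinearMap LinearMap.id u) := by
        rw [← mapL_sub, hdiff, mapL_add]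
        module
      rw [hrep2, hhomog]
      have hn2 : ‖((2:ℂ)⁻¹)‖ = (2:ℝ)⁻¹ := by
        rw [norm_inv]
        norm_num
      rw [hn2]
      have htri : Nγ (TensorProduct.map (a₀+b).toLinearMap LinearMap.id u
              - TensorProduct.map (a₀-b).toLinearMap LinearMap.id u)
          ≤ (k:ℝ) * Nγ u + (k:ℝ) * Nγ u := by
        rw [sub_eq_add_neg]
        calc Nγ (TensorProduct.map (a₀+b).toLinearMap LinearMap.id u
              + -(TensorProduct.map (a₀-b).toLinearMap LinearMap.id u))
            ≤ Nγ (TensorProduct.map (a₀+b).toLinearMap LinearMap.id u)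
              + Nγ (-(TensorProduct.map (a₀-b).toLinearMap LinearMap.id u)) := htriangle _ _
          _ = Nγ (TensorProduct.map (a₀+b).toLinearMap LinearMap.id u)
              + Nγ (TensorProduct.map (a₀-b).toLinearMap LinearMap.id u) := by rw [hneg]
          _ ≤ (k:ℝ) * Nγ u + (k:ℝ) * Nγ u := add_le_add (hmem1 u) (hmem2 u)
      calc ((2:ℝ)⁻¹) * Nγ (TensorProduct.map (a₀+b).toLinearMap LinearMap.id u
              - TensorProduct.map (a₀-b).toLinearMap LinearMap.id u)
          ≤ ((2:ℝ)⁻¹) * ((k:ℝ) * Nγ u + (k:ℝ) * Nγ u) :=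
            mul_le_mul_of_nonneg_left htri (by positivity)
        _ = (k:ℝ) * Nγ u := by ring
    have hfin : TensorProduct.map a.toLinearMap LinearMap.id u
        = ((2 * ‖a‖ / δ : ℝ) : ℂ) • TensorProduct.map b.toLinearMap LinearMap.id u := by
      rw [← mapL_smul]
      congr 1
      rw [hb, smul_smul]
      have hval : ((2 * ‖a‖ / δ : ℝ) : ℂ) * ((δ / (2 * ‖a‖) : ℝ) : ℂ) = 1 := by
        rw [← Complex.ofReal_mul]
        have : (2 * ‖a‖ / δ) * (δ / (2 * ‖a‖)) = (1:ℝ) := by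
          field_simp
        rw [this, Complex.ofReal_one]
      rw [hval, one_smul]
    rw [hfin, hhomog]
    have hcnorm : ‖((2 * ‖a‖ / δ : ℝ) : ℂ)‖ = 2 * ‖a‖ / δ := by
      rw [Complex.norm_real, Real.norm_eq_abs, abs_of_pos (by positivity)]
    rw [hcnorm]
    have hkC : 2 * (k:ℝ) / δ ≤ max 1 (4 * k / δ) := by
      refine le_trans ?_ (le_max_right _ _)
      have : (0:ℝ) ≤ 2 * k / δ := by positivity
      rw [div_le_div_iff_of_pos_right hδ] at *
      · linarith [Nat.cast_nonneg (α := ℝ) k]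
    calc (2 * ‖a‖ / δ) * Nγ (TensorProduct.map b.toLinearMap LinearMap.id u)
        ≤ (2 * ‖a‖ / δ) * ((k:ℝ) * Nγ u) :=
          mul_le_mul_of_nonneg_left hbu (by positivity)
      _ = (2 * (k:ℝ) / δ) * ‖a‖ * Nγ u := by ring
      _ ≤ max 1 (4 * k / δ) * ‖a‖ * Nγ u := by
          have h1 : (2 * (k:ℝ) / δ) * ‖a‖ ≤ max 1 (4 * k / δ) * ‖a‖ :=
            mul_le_mul_of_nonneg_right hkC (norm_nonneg a)
          exact mul_le_mul_of_nonneg_right h1 (hnonneg u)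

end Baire

lemma norm_comb_sq' (J : Finset ℕ) (w : ℕ → ℂ) :
    ‖∑ j ∈ J, w j • e j‖^2 = ∑ j ∈ J, ‖w j‖^2 := by
  have h := e_orthonormal.inner_sum w w J
  rw [← inner_self_eq_norm_sq (𝕜 := ℂ)]
  erw [h]
  rw [RCLike.re_to_complex, Complex.re_sum]
  exact Finset.sum_congr rfl fun l _ => conj_mul_re (w l)

lemma opA_inv (r : ℕ) (hr : r ≠ 0) (ε η : Fin r → Bool) (i₀ : Fin r) :
    opA r (fun l i => conj (cmat r ε η i l)) (opA r (cmat r ε η) (e i₀.val)) = e i₀.val := by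
  rw [opA_e, map_sum]
  have h1 : ∀ l : Fin r, (opA r (fun l i => conj (cmat r ε η i l))) (cmat r ε η l i₀ • e l.val)
      = ∑ l' : Fin r, (conj (cmat r ε η l l') * cmat r ε η l i₀) • e l'.val := by
    intro l
    rw [map_smul, opA_e, Finset.smul_sum]
    refine Finset.sum_congr rfl fun l' _ => ?_
    rw [smul_smul]
    congr 1
    ring
  simp_rw [h1]
  rw [Finset.sum_comm]
  have h2 : ∀ l' : Fin r, (∑ l : Fin r, (conj (cmat r ε η l l') * cmat r ε η l i₀) • e l'.val)
      = (if i₀ = l' then (1:ℂ) else 0) • e l'.val := by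
    intro l'
    rw [← Finset.sum_smul]
    congr 1
    calc ∑ l : Fin r, conj (cmat r ε η l l') * cmat r ε η l i₀
        = ∑ l : Fin r, cmat r ε η l i₀ * conj (cmat r ε η l l') :=
          Finset.sum_congr rfl fun l _ => mul_comm _ _
      _ = if i₀ = l' then 1 else 0 := cmat_col r hr ε η i₀ l'
  simp_rw [h2, ite_smul, one_smul, zero_smul]
  rw [Finset.sum_ite_eq]
  simp

lemma opA_inv_norm (r : ℕ) (hr : r ≠ 0) (ε η : Fin r → Bool) :
    ‖opA r (fun l i => conj (cmat r ε η i l))‖ ≤ 1 := by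
  apply opA_norm
  intro i i'
  calc ∑ l : Fin r, conj (cmat r ε η i l) * conj (conj (cmat r ε η i' l))
      = ∑ l : Fin r, cmat r ε η i' l * conj (cmat r ε η i l) := by
        refine Finset.sum_congr rfl fun l _ => ?_
        rw [Complex.conj_conj]
        ring
    _ = if i' = i then 1 else 0 := cmat_row r hr ε η i' i
    _ = if i = i' then 1 else 0 := by
        by_cases h : i = i'
        · simp [h]
        · rw [if_neg h, if_neg (fun hc => h hc.symm)]

lemma opA_cmat_norm (r : ℕ) (hr : r ≠ 0) (ε η : Fin r → Bool) :
    ‖opA r (cmat r ε η)‖ ≤ 1 := opA_norm r _ (cmat_col r hr ε η)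

lemma mapA_sum_tmul (a : EE) (r : ℕ) (q : ℕ → L2) :
    TensorProduct.map a.toLinearMap LinearMap.id
        (∑ i ∈ Finset.range r, (e i) ⊗ₜ[ℂ] (q i))
      = ∑ i ∈ Finset.range r, (a (e i)) ⊗ₜ[ℂ] (q i) := by
  rw [map_sum]
  exact Finset.sum_congr rfl fun i _ => TensorProduct.map_tmul _ _ _ _

end CPA


/-- A cross norm on the algebraic tensor product `ℓ² ⊗ ℓ²` such that every
bounded operator `a` on `ℓ²` has a bounded extension `a ⊗ id`, and satisfying
the property (α) inequality, must be equivalent to the Hilbert–Schmidt norm;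
hence the completion is isomorphic to `S²`. -/
theorem crossnorm_propAlpha_eq_hilbertSchmidt
    (Nγ : TensorProduct ℂ (lp (fun _ : ℕ => ℂ) 2) (lp (fun _ : ℕ => ℂ) 2) → ℝ)
    (hnonneg : ∀ u, 0 ≤ Nγ u)
    (htriangle : ∀ u v, Nγ (u + v) ≤ Nγ u + Nγ v)
    (hhomog : ∀ (c : ℂ) u, Nγ (c • u) = ‖c‖ * Nγ u)
    (hdef : ∀ u, Nγ u = 0 → u = 0)
    (hcross : ∀ z₁ z₂ : lp (fun _ : ℕ => ℂ) 2, Nγ (z₁ ⊗ₜ[ℂ] z₂) = ‖z₁‖ * ‖z₂‖)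
    (hext : ∀ a : lp (fun _ : ℕ => ℂ) 2 →L[ℂ] lp (fun _ : ℕ => ℂ) 2,
      ∃ C : ℝ, ∀ u, Nγ (TensorProduct.map a.toLinearMap LinearMap.id u) ≤ C * Nγ u)
    (α : ℝ) (hα1 : 1 ≤ α)
    (hα : ∀ (n m : ℕ)
      (y : Fin n → Fin m → TensorProduct ℂ (lp (fun _ : ℕ => ℂ) 2) (lp (fun _ : ℕ => ℂ) 2))
      (t : Fin n → Fin m → ℂ), (∀ i j, ‖t i j‖ ≤ 1) →
      Real.sqrt ((∑ ε : Fin n → Bool, ∑ η : Fin m → Bool,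
          (Nγ (∑ i, ∑ j, ((sgn (ε i) * sgn (η j)) * t i j) • y i j)) ^ 2) / 2 ^ (n + m))
        ≤ α * Real.sqrt ((∑ ε : Fin n → Bool, ∑ η : Fin m → Bool,
          (Nγ (∑ i, ∑ j, (sgn (ε i) * sgn (η j)) • y i j)) ^ 2) / 2 ^ (n + m))) :
    ∃ K : ℝ, 1 ≤ K ∧ ∀ (F : Finset (ℕ × ℕ)) (s : ℕ × ℕ → ℂ),
      K⁻¹ * Real.sqrt (∑ p ∈ F, ‖s p‖ ^ 2) ≤
          Nγ (∑ p ∈ F, s p • (e p.1 ⊗ₜ[ℂ] e p.2)) ∧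
        Nγ (∑ p ∈ F, s p • (e p.1 ⊗ₜ[ℂ] e p.2)) ≤
          K * Real.sqrt (∑ p ∈ F, ‖s p‖ ^ 2) := by
  classical
  obtain ⟨C₀, hC₀1, hC₀⟩ := CPA.uniform_bound Nγ hnonneg htriangle hhomog hcross hext
  have hC₀0 : (0:ℝ) < C₀ := lt_of_lt_of_le one_pos hC₀1
  have hα0 : (0:ℝ) < α := lt_of_lt_of_le one_pos hα1
  have hK0 : (0:ℝ) < α * C₀ := mul_pos hα0 hC₀0
  refine ⟨α * C₀, by nlinarith, fun F s => ?_⟩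
  set r : ℕ := F.sup Prod.fst + 1 with hrdef
  have hr : r ≠ 0 := Nat.succ_ne_zero _
  have hrpos : (0:ℝ) < (r:ℝ) := by
    have := Nat.pos_of_ne_zero hr
    exact_mod_cast this
  set q : ℕ → CPA.L2 := fun i => ∑ p ∈ F.filter (fun p => p.1 = i), s p • e p.2 with hq
  set u₀ : CPA.V2 := ∑ i ∈ Finset.range r, (e i) ⊗ₜ[ℂ] (q i) with hu₀
  have hmaps : ∀ p ∈ F, p.1 ∈ Finset.range r := fun p hp =>
    Finset.mem_range.mpr (Nat.lt_succ_of_le (Finset.le_sup (f := Prod.fst) hp))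
  -- the element identity
  have hu : (∑ p ∈ F, s p • (e p.1 ⊗ₜ[ℂ] e p.2)) = u₀ := by
    rw [hu₀, ← Finset.sum_fiberwise_of_maps_to hmaps (fun p => s p • (e p.1 ⊗ₜ[ℂ] e p.2))]
    refine Finset.sum_congr rfl fun i _ => ?_
    rw [hq]
    rw [TensorProduct.tmul_sum]
    refine Finset.sum_congr rfl fun p hp => ?_
    have hp1 : p.1 = i := by
      have := (Finset.mem_filter.mp hp).2
      exact this
    rw [hp1, TensorProduct.tmul_smul]
  -- the Hilbert-Schmidt identity
  have hQ : ∑ i ∈ Finset.range r, ‖q i‖^2 = ∑ p ∈ F, ‖s p‖^2 := by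
    rw [← Finset.sum_fiberwise_of_maps_to hmaps (fun p => ‖s p‖^2)]
    refine Finset.sum_congr rfl fun i _ => ?_
    have hinj : ∀ p ∈ F.filter (fun p => p.1 = i), ∀ p' ∈ F.filter (fun p => p.1 = i),
        p.2 = p'.2 → p = p' := by
      intro p hp p' hp' h2
      have h1 : p.1 = i := (Finset.mem_filter.mp hp).2
      have h1' : p'.1 = i := (Finset.mem_filter.mp hp').2
      exact Prod.ext (h1.trans h1'.symm) h2
    have him1 : ∑ j ∈ (F.filter (fun p => p.1 = i)).image Prod.snd, s (i, j) • e j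
        = ∑ p ∈ F.filter (fun p => p.1 = i), s p • e p.2 := by
      rw [Finset.sum_image hinj]
      refine Finset.sum_congr rfl fun p hp => ?_
      have h1 : p.1 = i := (Finset.mem_filter.mp hp).2
      rw [show ((i : ℕ), p.2) = p from Prod.ext h1.symm rfl]
    have him2 : ∑ j ∈ (F.filter (fun p => p.1 = i)).image Prod.snd, ‖s (i, j)‖^2
        = ∑ p ∈ F.filter (fun p => p.1 = i), ‖s p‖^2 := by
      rw [Finset.sum_image hinj]
      refine Finset.sum_congr rfl fun p hp => ?_
      have h1 : p.1 = i := (Finset.mem_filter.mp hp).2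
      rw [show ((i : ℕ), p.2) = p from Prod.ext h1.symm rfl]
    rw [hq]
    simp only []
    rw [← him1, CPA.norm_comb_sq' _ (fun j => s (i,j)), him2]
  -- data for the property (α) inequality
  set invc : ℂ := (((Real.sqrt r)⁻¹ : ℝ) : ℂ) with hinvc
  set y1 : Fin r → Fin r → CPA.V2 := fun l i => (invc • e l.val) ⊗ₜ[ℂ] q i.val with hy1
  set t1 : Fin r → Fin r → ℂ := fun l i => (CPA.om r)^(l.val * i.val) with ht1def
  have ht1 : ∀ l i : Fin r, ‖t1 l i‖ ≤ 1 := fun l i => le_of_eq (CPA.om_pow_norm r _)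
  set y2 : Fin r → Fin r → CPA.V2 := fun l i => (t1 l i) • y1 l i with hy2
  set t2 : Fin r → Fin r → ℂ := fun l i => conj ((CPA.om r)^(l.val * i.val)) with ht2def
  have ht2 : ∀ l i : Fin r, ‖t2 l i‖ ≤ 1 := fun l i => by
    rw [ht2def]
    simp only []
    rw [RCLike.norm_conj]
    exact le_of_eq (CPA.om_pow_norm r _)
  -- twisted identity
  have htwist : ∀ ε η : Fin r → Bool,
      (∑ l : Fin r, ∑ i : Fin r, ((sgn (ε l) * sgn (η i)) * t1 l i) • y1 l i)
        = TensorProduct.map (CPA.opA r (CPA.cmat r ε η)).toLinearMap LinearMap.id u₀ := by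
    intro ε η
    rw [hu₀, CPA.mapA_sum_tmul,
      ← Fin.sum_univ_eq_sum_range (fun i => ((CPA.opA r (CPA.cmat r ε η)) (e i)) ⊗ₜ[ℂ] q i) r]
    rw [Finset.sum_comm]
    refine Finset.sum_congr rfl fun i _ => ?_
    rw [CPA.opA_e, TensorProduct.sum_tmul]
    refine Finset.sum_congr rfl fun l _ => ?_
    rw [hy1]
    simp only []
    rw [TensorProduct.smul_tmul', smul_smul]
    have hc : sgn (ε l) * sgn (η i) * t1 l i * invc = CPA.cmat r ε η l i := by
      rw [CPA.cmat, ht1def, hinvc]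
    rw [hc]
  -- untwisted identity
  have huntwist : ∀ ε η : Fin r → Bool,
      (∑ l : Fin r, ∑ i : Fin r, (sgn (ε l) * sgn (η i)) • y1 l i)
        = (∑ l : Fin r, sgn (ε l) • (invc • e l.val)) ⊗ₜ[ℂ] (∑ i : Fin r, sgn (η i) • q i.val) := by
    intro ε η
    rw [TensorProduct.sum_tmul]
    refine Finset.sum_congr rfl fun l _ => ?_
    rw [TensorProduct.tmul_sum]
    refine Finset.sum_congr rfl fun i _ => ?_
    rw [hy1]
    simp only [TensorProduct.tmul_smul, ← TensorProduct.smul_tmul', smul_smul]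
    congr 1
    ring
  -- identities for the second application
  have hlhs2 : ∀ ε η : Fin r → Bool,
      (∑ l : Fin r, ∑ i : Fin r, ((sgn (ε l) * sgn (η i)) * t2 l i) • y2 l i)
        = ∑ l : Fin r, ∑ i : Fin r, (sgn (ε l) * sgn (η i)) • y1 l i := by
    intro ε η
    refine Finset.sum_congr rfl fun l _ => Finset.sum_congr rfl fun i _ => ?_
    rw [hy2]
    simp only []
    rw [smul_smul]
    congr 1
    rw [ht2def, ht1def]
    simp only []
    have h := CPA.conj_mul_self_pow r (l.val * i.val)
    linear_combination (sgn (ε l) * sgn (η i)) * h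
  have hrhs2 : ∀ ε η : Fin r → Bool,
      (∑ l : Fin r, ∑ i : Fin r, (sgn (ε l) * sgn (η i)) • y2 l i)
        = ∑ l : Fin r, ∑ i : Fin r, ((sgn (ε l) * sgn (η i)) * t1 l i) • y1 l i := by
    intro ε η
    refine Finset.sum_congr rfl fun l _ => Finset.sum_congr rfl fun i _ => ?_
    rw [hy2]
    simp only []
    rw [smul_smul]
  -- norm bounds for the twisted terms
  have hup : ∀ ε η : Fin r → Bool,
      Nγ (TensorProduct.map (CPA.opA r (CPA.cmat r ε η)).toLinearMap LinearMap.id u₀)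
        ≤ C₀ * Nγ u₀ := by
    intro ε η
    calc Nγ (TensorProduct.map (CPA.opA r (CPA.cmat r ε η)).toLinearMap LinearMap.id u₀)
        ≤ C₀ * ‖CPA.opA r (CPA.cmat r ε η)‖ * Nγ u₀ := hC₀ _ _
      _ ≤ C₀ * 1 * Nγ u₀ := by
          have h1 : C₀ * ‖CPA.opA r (CPA.cmat r ε η)‖ ≤ C₀ * 1 :=
            mul_le_mul_of_nonneg_left (CPA.opA_cmat_norm r hr ε η) hC₀0.le
          exact mul_le_mul_of_nonneg_right h1 (hnonneg u₀)
      _ = C₀ * Nγ u₀ := by ring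
  have hlow : ∀ ε η : Fin r → Bool,
      Nγ u₀ ≤ C₀ *
        Nγ (TensorProduct.map (CPA.opA r (CPA.cmat r ε η)).toLinearMap LinearMap.id u₀) := by
    intro ε η
    have hcomp : TensorProduct.map
          (CPA.opA r (fun l i => conj (CPA.cmat r ε η i l))).toLinearMap LinearMap.id
          (TensorProduct.map (CPA.opA r (CPA.cmat r ε η)).toLinearMap LinearMap.id u₀)
        = u₀ := by
      rw [hu₀, CPA.mapA_sum_tmul, map_sum]
      refine Finset.sum_congr rfl fun i hi => ?_
      rw [TensorProduct.map_tmul]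
      have hi' : i < r := Finset.mem_range.mp hi
      have hinv : (CPA.opA r (fun l i' => conj (CPA.cmat r ε η i' l)))
          ((CPA.opA r (CPA.cmat r ε η)) (e i)) = e i := CPA.opA_inv r hr ε η ⟨i, hi'⟩
      simp only [ContinuousLinearMap.coe_coe, LinearMap.id_coe, id_eq]
      rw [hinv]
    calc Nγ u₀
        = Nγ (TensorProduct.map
            (CPA.opA r (fun l i => conj (CPA.cmat r ε η i l))).toLinearMap LinearMap.id
            (TensorProduct.map (CPA.opA r (CPA.cmat r ε η)).toLinearMap LinearMap.id u₀)) := by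
          rw [hcomp]
      _ ≤ C₀ * ‖CPA.opA r (fun l i => conj (CPA.cmat r ε η i l))‖ *
            Nγ (TensorProduct.map (CPA.opA r (CPA.cmat r ε η)).toLinearMap LinearMap.id u₀) :=
          hC₀ _ _
      _ ≤ C₀ * 1 *
            Nγ (TensorProduct.map (CPA.opA r (CPA.cmat r ε η)).toLinearMap LinearMap.id u₀) := by
          have h1 : C₀ * ‖CPA.opA r (fun l i => conj (CPA.cmat r ε η i l))‖ ≤ C₀ * 1 :=
            mul_le_mul_of_nonneg_left (CPA.opA_inv_norm r hr ε η) hC₀0.le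
          exact mul_le_mul_of_nonneg_right h1 (hnonneg _)
      _ = C₀ * Nγ (TensorProduct.map (CPA.opA r (CPA.cmat r ε η)).toLinearMap LinearMap.id u₀) := by
          ring
  -- sums of squares
  set X1 : ℝ := ∑ ε : Fin r → Bool, ∑ η : Fin r → Bool,
    (Nγ (TensorProduct.map (CPA.opA r (CPA.cmat r ε η)).toLinearMap LinearMap.id u₀))^2 with hX1
  set Q : ℝ := ∑ p ∈ F, ‖s p‖^2 with hQdef
  have hQ0 : 0 ≤ Q := Finset.sum_nonneg fun p _ => by positivity
  set P : ℝ := 2 ^ (r + r) with hP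
  have hP0 : (0:ℝ) < P := by positivity
  have hcardfun : (Finset.univ : Finset (Fin r → Bool)).card = 2^r := by
    rw [Finset.card_univ, Fintype.card_fun]
    simp
  -- untwisted squares sum
  have hA : ∑ ε : Fin r → Bool, ‖∑ l : Fin r, sgn (ε l) • (invc • e l.val)‖^2 = 2^r := by
    rw [CPA.rademacher r (fun l => invc • e l.val)]
    have hl : ∀ l : Fin r, ‖invc • e (l:ℕ)‖^2 = (r:ℝ)⁻¹ := by
      intro l
      rw [norm_smul, CPA.e_norm, mul_one, hinvc, Complex.norm_real, Real.norm_eq_abs,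
        abs_of_nonneg (by positivity)]
      rw [inv_pow, Real.sq_sqrt (le_of_lt hrpos)]
    simp_rw [hl]
    rw [Finset.sum_const, Finset.card_univ]
    simp only [Fintype.card_fin, nsmul_eq_mul]
    rw [mul_inv_cancel₀ (ne_of_gt hrpos), mul_one]
  have hB : ∑ η : Fin r → Bool, ‖∑ i : Fin r, sgn (η i) • q i.val‖^2 = 2^r * Q := by
    rw [CPA.rademacher r (fun i => q i.val)]
    congr 1
    rw [Fin.sum_univ_eq_sum_range (fun n => ‖q n‖^2) r, hQ, hQdef]
  have hX2 : (∑ ε : Fin r → Bool, ∑ η : Fin r → Bool,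
      (Nγ (∑ l : Fin r, ∑ i : Fin r, (sgn (ε l) * sgn (η i)) • y1 l i))^2) = P * Q := by
    have h1 : ∀ ε η : Fin r → Bool,
        (Nγ (∑ l : Fin r, ∑ i : Fin r, (sgn (ε l) * sgn (η i)) • y1 l i))^2
          = ‖∑ l : Fin r, sgn (ε l) • (invc • e l.val)‖^2 * ‖∑ i : Fin r, sgn (η i) • q i.val‖^2 := by
      intro ε η
      rw [huntwist ε η, hcross, mul_pow]
    simp_rw [h1]
    rw [← Finset.sum_mul_sum, hA, hB, hP]
    rw [pow_add]
    ring
  -- bounds on X1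
  have hX1up : X1 ≤ P * (C₀ * Nγ u₀)^2 := by
    rw [hX1]
    calc (∑ ε : Fin r → Bool, ∑ η : Fin r → Bool,
        (Nγ (TensorProduct.map (CPA.opA r (CPA.cmat r ε η)).toLinearMap LinearMap.id u₀))^2)
        ≤ ∑ _ε : Fin r → Bool, ∑ _η : Fin r → Bool, (C₀ * Nγ u₀)^2 := by
          refine Finset.sum_le_sum fun ε _ => Finset.sum_le_sum fun η _ => ?_
          exact pow_le_pow_left₀ (hnonneg _) (hup ε η) 2
      _ = P * (C₀ * Nγ u₀)^2 := by
          rw [Finset.sum_const, Finset.sum_const, hcardfun, smul_smul, nsmul_eq_mul,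
            Nat.cast_mul, Nat.cast_pow, Nat.cast_ofNat, hP]
          simp only [hrdef, pow_add]
          try ring
  have hX1low : P * (C₀⁻¹ * Nγ u₀)^2 ≤ X1 := by
    rw [hX1]
    calc P * (C₀⁻¹ * Nγ u₀)^2
        = ∑ _ε : Fin r → Bool, ∑ _η : Fin r → Bool, (C₀⁻¹ * Nγ u₀)^2 := by
          rw [Finset.sum_const, Finset.sum_const, hcardfun, smul_smul, nsmul_eq_mul,
            Nat.cast_mul, Nat.cast_pow, Nat.cast_ofNat, hP]
          simp only [hrdef, pow_add]
          try ring
      _ ≤ ∑ ε : Fin r → Bool, ∑ η : Fin r → Bool,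
          (Nγ (TensorProduct.map (CPA.opA r (CPA.cmat r ε η)).toLinearMap LinearMap.id u₀))^2 := by
          refine Finset.sum_le_sum fun ε _ => Finset.sum_le_sum fun η _ => ?_
          refine pow_le_pow_left₀ (mul_nonneg (inv_nonneg.mpr hC₀0.le) (hnonneg u₀)) ?_ 2
          rw [inv_mul_le_iff₀ hC₀0]
          exact hlow ε η
  -- first application of (α)
  have h1 := hα r r y1 t1 ht1
  simp only [htwist, huntwist] at h1
  -- second application of (α)
  have h2 := hα r r y2 t2 ht2
  simp only [hlhs2, hrhs2, htwist, huntwist] at h2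
  -- rewrite cross norms
  have hXQ : (∑ ε : Fin r → Bool, ∑ η : Fin r → Bool,
      (Nγ ((∑ l : Fin r, sgn (ε l) • (invc • e l.val)) ⊗ₜ[ℂ]
        (∑ i : Fin r, sgn (η i) • q i.val)))^2) = P * Q := by
    have h1' : ∀ ε η : Fin r → Bool,
        (Nγ ((∑ l : Fin r, sgn (ε l) • (invc • e l.val)) ⊗ₜ[ℂ]
          (∑ i : Fin r, sgn (η i) • q i.val)))^2
          = ‖∑ l : Fin r, sgn (ε l) • (invc • e l.val)‖^2 * ‖∑ i : Fin r, sgn (η i) • q i.val‖^2 := by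
      intro ε η
      rw [hcross, mul_pow]
    simp_rw [h1']
    rw [← Finset.sum_mul_sum, hA, hB, hP]
    rw [pow_add]
    ring
  rw [hXQ] at h1 h2
  have hQP : P * Q / P = Q := by
    field_simp
  rw [hQP] at h1 h2
  -- h1 : sqrt (X1 / P) ≤ α * sqrt Q  (up to the names)
  -- h2 : sqrt Q ≤ α * sqrt (X1 / P)
  have hsq1 : C₀⁻¹ * Nγ u₀ ≤ Real.sqrt (X1 / P) := by
    have hle : (C₀⁻¹ * Nγ u₀)^2 ≤ X1 / P := (le_div_iff₀ hP0).mpr (by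
      calc (C₀⁻¹ * Nγ u₀)^2 * P = P * (C₀⁻¹ * Nγ u₀)^2 := by ring
        _ ≤ X1 := hX1low)
    calc C₀⁻¹ * Nγ u₀ = Real.sqrt ((C₀⁻¹ * Nγ u₀)^2) :=
          (Real.sqrt_sq (mul_nonneg (inv_nonneg.mpr hC₀0.le) (hnonneg u₀))).symm
      _ ≤ Real.sqrt (X1 / P) := Real.sqrt_le_sqrt hle
  have hsq2 : Real.sqrt (X1 / P) ≤ C₀ * Nγ u₀ := by
    have hle : X1 / P ≤ (C₀ * Nγ u₀)^2 := by
      rw [div_le_iff₀ hP0]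
      calc X1 ≤ P * (C₀ * Nγ u₀)^2 := hX1up
        _ = (C₀ * Nγ u₀)^2 * P := by ring
    calc Real.sqrt (X1 / P) ≤ Real.sqrt ((C₀ * Nγ u₀)^2) := Real.sqrt_le_sqrt hle
      _ = C₀ * Nγ u₀ := Real.sqrt_sq (mul_nonneg hC₀0.le (hnonneg u₀))
  rw [hu]
  constructor
  · -- lower bound
    rw [inv_mul_le_iff₀ hK0]
    calc Real.sqrt Q ≤ α * Real.sqrt (X1 / P) := h2
      _ ≤ α * (C₀ * Nγ u₀) := mul_le_mul_of_nonneg_left hsq2 hα0.le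
      _ = α * C₀ * Nγ u₀ := by ring
  · -- upper bound
    have := le_trans hsq1 h1
    calc Nγ u₀ = C₀ * (C₀⁻¹ * Nγ u₀) := by
          field_simp
      _ ≤ C₀ * (α * Real.sqrt Q) := mul_le_mul_of_nonneg_left this hC₀0.le
      _ = α * C₀ * Real.sqrt Q := by ring


end
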